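/- Let F be a field, let n ≥ 1, and let S be a finite generating system of the full matrix algebra M_n(F). If S contains a nonderogatory matrix, i.e., a matrix whose minimal polynomial has degree n, then ℓ(S) ≤ 2n − 2. -/

import Mathlib

open Polynomial Matrix

/-- The `F`-linear span of all words over `S` of length at most `i`
(the empty word being `1`). -/
def wordSpan (F : Type*) {A : Type*} [Field F] [Ring A] [Algebra F A]
    (S : Set A) (i : ℕ) : Submodule F A :=
  Submodule.span F {x : A | ∃ l : List A, l.length ≤ i ∧ (∀ a ∈ l, a ∈ S) ∧ l.prod = x}

/-- `S` is a generating system of the algebra `A`: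
`A` is the union of the subspaces `wordSpan F S i`. -/
def IsGeneratingSystem (F : Type*) {A : Type*} [Field F] [Ring A] [Algebra F A]
    (S : Set A) : Prop :=
  ∀ x : A, ∃ i : ℕ, x ∈ wordSpan F S i

/-- The length of a generating system `S`: the least `k` with `wordSpan F S k = ⊤`. -/
noncomputable def genLength (F : Type*) {A : Type*} [Field F] [Ring A] [Algebra F A]
    (S : Set A) : ℕ :=
  sInf {k : ℕ | wordSpan F S k = ⊤}

section Basic

variable {F A : Type*} [Field F] [Ring A] [Algebra F A] {S : Set A}

lemma wordSpan_mono {i j : ℕ} (hij : i ≤ j) : wordSpan F S i ≤ wordSpan F S j :=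
  Submodule.span_mono (fun x ⟨l, hl, hm, hp⟩ => ⟨l, hl.trans hij, hm, hp⟩)

lemma one_mem_wordSpan (i : ℕ) : (1 : A) ∈ wordSpan F S i :=
  Submodule.subset_span ⟨[], by simp⟩

lemma mul_mem_wordSpan {x y : A} {i j : ℕ}
    (hx : x ∈ wordSpan F S i) (hy : y ∈ wordSpan F S j) :
    x * y ∈ wordSpan F S (i + j) := by
  induction hx using Submodule.span_induction with
  | mem x hx =>
    induction hy using Submodule.span_induction with
    | mem y hy =>
      obtain ⟨l, hl, hm, rfl⟩ := hx
      obtain ⟨l', hl', hm', rfl⟩ := hy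
      refine Submodule.subset_span ⟨l ++ l', ?_, ?_, List.prod_append⟩
      · simpa using Nat.add_le_add hl hl'
      · intro a ha
        rcases List.mem_append.mp ha with h | h
        exacts [hm a h, hm' a h]
    | zero => simpa using Submodule.zero_mem _
    | add y z _ _ hy hz => rw [mul_add]; exact Submodule.add_mem _ hy hz
    | smul c y _ hy => rw [mul_smul_comm]; exact Submodule.smul_mem _ c hy
  | zero => simpa using Submodule.zero_mem _
  | add x z _ _ hx hz => rw [add_mul]; exact Submodule.add_mem _ hx hz
  | smul c x _ hx => rw [smul_mul_assoc]; exact Submodule.smul_mem _ c hx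

lemma mem_wordSpan_of_mem {a : A} (ha : a ∈ S) : a ∈ wordSpan F S 1 :=
  Submodule.subset_span ⟨[a], by simp [ha]⟩

lemma pow_mem_wordSpan {a : A} (ha : a ∈ S) (b : ℕ) : a ^ b ∈ wordSpan F S b :=
  Submodule.subset_span ⟨List.replicate b a, by simp [List.forall_mem_replicate, ha]⟩

lemma aeval_mem_wordSpan {n : ℕ} {a : A} (ha : a ∈ S) (q : F[X]) (hq : q.natDegree < n) :
    aeval a q ∈ wordSpan F S (n - 1) := by
  rw [aeval_eq_sum_range' hq]
  refine Submodule.sum_mem _ fun b hb => Submodule.smul_mem _ _ ?_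
  have hb' : b < n := Finset.mem_range.mp hb
  exact wordSpan_mono (by omega : b ≤ n - 1) (pow_mem_wordSpan ha b)

end Basic

section MatrixLemmas

variable {K : Type*} [Field K] {n : ℕ}

/-- Evaluation of a matrix on a fixed vector, as a linear map in the matrix. -/
def mulVecAt (u : Fin n → K) : Matrix (Fin n) (Fin n) K →ₗ[K] (Fin n → K) where
  toFun X := X.mulVec u
  map_add' X Y := Matrix.add_mulVec X Y u
  map_smul' c X := Matrix.smul_mulVec c X u

variable {T : Set (Matrix (Fin n) (Fin n) K)}

lemma mulVec_mem_map_succ {a : Matrix (Fin n) (Fin n) K} (ha : a ∈ T) {u : Fin n → K} {k : ℕ}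
    {z : Fin n → K} (hz : z ∈ (wordSpan K T k).map (mulVecAt u)) :
    a.mulVec z ∈ (wordSpan K T (k + 1)).map (mulVecAt u) := by
  obtain ⟨X, hX, rfl⟩ := hz
  refine ⟨a * X, ?_, (Matrix.mulVec_mulVec u a X).symm⟩
  have := mul_mem_wordSpan (mem_wordSpan_of_mem (F := K) ha) hX
  rwa [Nat.add_comm] at this

lemma Useq_step {u : Fin n → K} {k : ℕ}
    (h : (wordSpan K T (k + 1)).map (mulVecAt u) ≤ (wordSpan K T k).map (mulVecAt u)) :
    (wordSpan K T (k + 2)).map (mulVecAt u) ≤ (wordSpan K T (k + 1)).map (mulVecAt u) := by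
  rw [Submodule.map_le_iff_le_comap]
  intro X hX
  induction hX using Submodule.span_induction with
  | mem x hx =>
    obtain ⟨l, hl, hm, rfl⟩ := hx
    simp only [Submodule.mem_comap]
    match l, hm with
    | [], _ => exact ⟨1, one_mem_wordSpan _, rfl⟩
    | a :: t, hm =>
      have ht : t.prod ∈ wordSpan K T (k + 1) :=
        Submodule.subset_span ⟨t, by simpa using Nat.succ_le_succ_iff.mp hl,
          fun b hb => hm b (List.mem_cons_of_mem a hb), rfl⟩
      have hz : (mulVecAt u) t.prod ∈ (wordSpan K T k).map (mulVecAt u) :=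
        h ⟨t.prod, ht, rfl⟩
      have : (mulVecAt u) (a :: t).prod = a.mulVec ((mulVecAt u) t.prod) := by
        show ((a * t.prod).mulVec u) = _
        exact (Matrix.mulVec_mulVec u a t.prod).symm
      rw [this]
      exact mulVec_mem_map_succ (hm a (List.mem_cons_self)) hz
  | zero => simp
  | add x y _ _ hx hy => simpa [map_add] using Submodule.add_mem _ hx hy
  | smul c x _ hx => simpa [_root_.map_smul] using Submodule.smul_mem _ c hx

lemma Useq_stab {u : Fin n → K} {k₀ : ℕ}
    (h : (wordSpan K T (k₀ + 1)).map (mulVecAt u) ≤ (wordSpan K T k₀).map (mulVecAt u)) :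
    ∀ m, (wordSpan K T m).map (mulVecAt u) ≤ (wordSpan K T k₀).map (mulVecAt u) := by
  have key : ∀ j, (wordSpan K T (k₀ + j + 1)).map (mulVecAt u)
      ≤ (wordSpan K T (k₀ + j)).map (mulVecAt u) := by
    intro j
    induction j with
    | zero => exact h
    | succ j ih => exact Useq_step ih
  have chain : ∀ j, (wordSpan K T (k₀ + j)).map (mulVecAt u)
      ≤ (wordSpan K T k₀).map (mulVecAt u) := by
    intro j
    induction j with
    | zero => exact le_rfl
    | succ j ih => exact le_trans (key j) ih
  intro m
  rcases le_or_gt m k₀ with hm | hm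
  · exact Submodule.map_mono (wordSpan_mono hm)
  · have : m = k₀ + (m - k₀) := by omega
    rw [this]; exact chain _

lemma top_le_Useq_of_stab (hgenT : IsGeneratingSystem K T) {u : Fin n → K} (hu : u ≠ 0) {k₀ : ℕ}
    (h : (wordSpan K T (k₀ + 1)).map (mulVecAt u) ≤ (wordSpan K T k₀).map (mulVecAt u)) :
    (wordSpan K T k₀).map (mulVecAt u) = ⊤ := by
  rw [eq_top_iff]
  intro z _
  obtain ⟨j, hj⟩ : ∃ j, u j ≠ 0 := Function.ne_iff.mp hu
  set X : Matrix (Fin n) (Fin n) K := Matrix.of fun p q => if q = j then (u j)⁻¹ * z p else 0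
  have hXu : X.mulVec u = z := by
    funext p
    simp only [Matrix.mulVec, dotProduct, X, Matrix.of_apply, ite_mul, zero_mul]
    rw [Finset.sum_ite_eq' Finset.univ j fun q => (u j)⁻¹ * z p * u q]
    simp [hj]
    rw [mul_comm, ← mul_assoc, mul_inv_cancel₀ hj, one_mul]
  obtain ⟨m, hm⟩ := hgenT X
  exact Useq_stab h m ⟨X, hm, hXu⟩

lemma lemma1 (hgenT : IsGeneratingSystem K T) (u : Fin n → K) (hu : u ≠ 0) :
    (wordSpan K T (n - 1)).map (mulVecAt u) = ⊤ := by
  have grow : ∀ k, (wordSpan K T k).map (mulVecAt u) = ⊤ ∨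
      k + 1 ≤ Module.finrank K ((wordSpan K T k).map (mulVecAt u)) := by
    intro k
    induction k with
    | zero =>
      by_cases htop : (wordSpan K T 0).map (mulVecAt u) = ⊤
      · exact Or.inl htop
      · refine Or.inr ?_
        have hmem : u ∈ (wordSpan K T 0).map (mulVecAt u) :=
          ⟨1, one_mem_wordSpan _, Matrix.one_mulVec u⟩
        have hne : (wordSpan K T 0).map (mulVecAt u) ≠ ⊥ := by
          intro hbot
          rw [hbot] at hmem
          exact hu (by simpa using hmem)
        have hiff := Submodule.finrank_eq_zero (R := K)
          (M := Fin n → K) (S := (wordSpan K T 0).map (mulVecAt u))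
        have : Module.finrank K ((wordSpan K T 0).map (mulVecAt u)) ≠ 0 :=
          fun h0 => hne (hiff.mp h0)
        omega
    | succ k ih =>
      rcases ih with htop | hrank
      · left
        rw [eq_top_iff, ← htop]
        exact Submodule.map_mono (wordSpan_mono (Nat.le_succ k))
      · by_cases heq : (wordSpan K T (k + 1)).map (mulVecAt u) ≤ (wordSpan K T k).map (mulVecAt u)
        · left
          have hk := top_le_Useq_of_stab hgenT hu heq
          rw [eq_top_iff, ← hk]
          exact Submodule.map_mono (wordSpan_mono (Nat.le_succ k))
        · right
          have hlt : (wordSpan K T k).map (mulVecAt u) < (wordSpan K T (k + 1)).map (mulVecAt u) := by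
            refine lt_of_le_of_ne (Submodule.map_mono (wordSpan_mono (Nat.le_succ k))) ?_
            intro he
            exact heq (le_of_eq he.symm)
          have := Submodule.finrank_lt_finrank_of_lt hlt
          omega
  rcases grow (n - 1) with htop | hrank
  · exact htop
  · have hle : Module.finrank K ((wordSpan K T (n - 1)).map (mulVecAt u))
        ≤ Module.finrank K (Fin n → K) := Submodule.finrank_le _
    have hn : Module.finrank K (Fin n → K) = n := by simp
    rcases Nat.eq_zero_or_pos n with h0 | hpos
    · subst h0
      apply Submodule.eq_top_of_finrank_eq
      omega
    · apply Submodule.eq_top_of_finrank_eq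
      omega

end MatrixLemmas

section KernelBound

variable {K : Type*} [Field K] {n : ℕ}

lemma ker_shift_finrank_le_one {C : Matrix (Fin n) (Fin n) K}
    (hind : ∀ q : K[X], q ≠ 0 → q.natDegree < n → aeval C q ≠ 0) (μ : K) :
    Module.finrank K (LinearMap.ker (Matrix.mulVecLin (C - μ • 1))) ≤ 1 := by
  by_contra hlt
  push_neg at hlt
  set D := C - μ • (1 : Matrix (Fin n) (Fin n) K) with hDdef
  set f := Matrix.mulVecLin D with hfdef
  set V := LinearMap.range f with hVdef
  have hV : ∀ v ∈ V, f v ∈ V := fun v _ => LinearMap.mem_range_self f v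
  set g := f.restrict hV with hgdef
  have hres : ∀ (m : K[X]) (v : Fin n → K) (hv : v ∈ V),
      (aeval f m) v = ((aeval g m ⟨v, hv⟩ : V) : Fin n → K) := by
    intro m
    induction m using Polynomial.induction_on' with
    | add p q hp hq =>
      intro v hv
      simp only [map_add, LinearMap.add_apply, hp v hv, hq v hv, Submodule.coe_add]
    | monomial k a =>
      intro v hv
      rw [aeval_monomial, aeval_monomial]
      have h1 : (algebraMap K (Module.End K (Fin n → K)) a * f ^ k) v
          = a • ((f ^ k) v) := by
        rw [Module.End.mul_apply, Module.algebraMap_end_apply]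
      have h2 : ((f ^ k) v) = ((g ^ k) ⟨v, hv⟩ : V) := by
        rw [hgdef, Module.End.pow_restrict, LinearMap.restrict_apply]
      rw [h1, h2]
      have h3 : (algebraMap K (Module.End K V) a * g ^ k) ⟨v, hv⟩
          = a • ((g ^ k) ⟨v, hv⟩) := by
        rw [Module.End.mul_apply, Module.algebraMap_end_apply]
      rw [h3, Submodule.coe_smul]
  have hQ : aeval f (LinearMap.charpoly g * X) = 0 := by
    rw [_root_.map_mul, aeval_X]
    apply LinearMap.ext
    intro w
    have hfw : f w ∈ V := LinearMap.mem_range_self f w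
    have : (aeval f (LinearMap.charpoly g) * f) w = (aeval f (LinearMap.charpoly g)) (f w) :=
      Module.End.mul_apply _ _ _
    rw [this, hres _ (f w) hfw, LinearMap.aeval_self_charpoly]
    simp
  have hDQ : aeval D (LinearMap.charpoly g * X) = 0 := by
    have hfD : f = Matrix.toLinAlgEquiv' D := by
      ext v
      simp [hfdef, Matrix.mulVecLin_apply, Matrix.toLinAlgEquiv'_apply]
    have := Polynomial.aeval_algHom_apply (Matrix.toLinAlgEquiv' :
      Matrix (Fin n) (Fin n) K ≃ₐ[K] _) D (LinearMap.charpoly g * X)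
    rw [← hfD] at this
    rw [hQ] at this
    exact (map_eq_zero_iff _ (Matrix.toLinAlgEquiv').injective).mp this.symm
  set q : K[X] := (LinearMap.charpoly g * X).comp (X - Polynomial.C μ) with hqdef
  have haevalq : aeval C q = 0 := by
    rw [hqdef, aeval_comp]
    have : aeval C (X - Polynomial.C μ) = D := by
      rw [map_sub, aeval_X, aeval_C, hDdef, Algebra.algebraMap_eq_smul_one]
    rw [this, hDQ]
  have hmonic : q.Monic := by
    apply Polynomial.Monic.comp
    · exact ((LinearMap.charpoly_monic g).mul monic_X)
    · exact monic_X_sub_C μ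
    · rw [natDegree_X_sub_C]; omega
  have hdeg : q.natDegree < n := by
    have h1 : q.natDegree = (LinearMap.charpoly g * X).natDegree * 1 := by
      rw [hqdef, natDegree_comp, natDegree_X_sub_C]
    have h2 : (LinearMap.charpoly g * X).natDegree
        = (LinearMap.charpoly g).natDegree + 1 := by
      rw [natDegree_mul (LinearMap.charpoly_monic g).ne_zero X_ne_zero, natDegree_X]
    have h3 : (LinearMap.charpoly g).natDegree = Module.finrank K V :=
      LinearMap.charpoly_natDegree g
    have h4 : Module.finrank K V + Module.finrank K (LinearMap.ker f)
        = Module.finrank K (Fin n → K) := by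
      rw [hVdef]
      exact LinearMap.finrank_range_add_finrank_ker f
    have h5 : Module.finrank K (Fin n → K) = n := by simp
    omega
  exact hind q hmonic.ne_zero hdeg haevalq

end KernelBound

section Descent

variable {K : Type*} [Field K] {n : ℕ}

lemma mulVecLin_eq_zero_iff {G : Matrix (Fin n) (Fin n) K} :
    Matrix.mulVecLin G = 0 ↔ G = 0 := by
  constructor
  · intro h
    ext i j
    have : G.mulVec (Pi.single j 1) = 0 := by
      rw [← Matrix.mulVecLin_apply, h]; rfl
    have := congrFun this i
    simpa [Matrix.mulVec_single] using this
  · rintro rfl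
    exact Matrix.mulVecLin_zero

lemma exists_rank_one_image {C G : Matrix (Fin n) (Fin n) K}
    (hker : ∀ μ : K, Module.finrank K (LinearMap.ker (Matrix.mulVecLin (C - μ • 1))) ≤ 1)
    (hCH : ∃ m : Multiset K,
      (m.map fun μ => X - Polynomial.C μ).prod = Matrix.charpoly C)
    (hG : G ≠ 0) :
    ∃ h : K[X],
      Module.finrank K (LinearMap.range (Matrix.mulVecLin (aeval C h * G))) = 1 := by
  by_contra hcon
  push_neg at hcon
  have htwo : ∀ h : K[X],
      LinearMap.range (Matrix.mulVecLin (aeval C h * G)) ≠ ⊥ →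
      2 ≤ Module.finrank K (LinearMap.range (Matrix.mulVecLin (aeval C h * G))) := by
    intro h hne
    have h0 : Module.finrank K (LinearMap.range (Matrix.mulVecLin (aeval C h * G))) ≠ 0 := by
      intro hz
      exact hne (Submodule.finrank_eq_zero.mp hz)
    have h1 := hcon h
    omega
  have main : ∀ (m : Multiset K) (h : K[X]),
      LinearMap.range (Matrix.mulVecLin (aeval C h * G)) ≠ ⊥ →
      LinearMap.range (Matrix.mulVecLin
        (aeval C (h * (m.map fun μ => X - Polynomial.C μ).prod) * G)) ≠ ⊥ := by
    intro m
    induction m using Multiset.induction_on with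
    | empty => intro h hh; simpa using hh
    | cons μ m ih =>
      intro h hh
      have step : LinearMap.range (Matrix.mulVecLin
          (aeval C (h * (X - Polynomial.C μ)) * G)) ≠ ⊥ := by
        have hcomm : aeval C (h * (X - Polynomial.C μ)) * G
            = (C - μ • 1) * (aeval C h * G) := by
          rw [mul_comm h (X - Polynomial.C μ), _root_.map_mul]
          have : aeval C (X - Polynomial.C μ) = C - μ • 1 := by
            rw [map_sub, aeval_X, aeval_C, Algebra.algebraMap_eq_smul_one]
          rw [this, mul_assoc]
        rw [hcomm]
        intro hbot
        rw [Matrix.mulVecLin_mul, LinearMap.range_comp] at hbot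
        have hle : LinearMap.range (Matrix.mulVecLin (aeval C h * G))
            ≤ LinearMap.ker (Matrix.mulVecLin (C - μ • 1)) := by
          intro x hx
          rw [LinearMap.mem_ker]
          have : (C - μ • 1).mulVecLin x ∈ Submodule.map (C - μ • 1).mulVecLin
              (LinearMap.range ((aeval C) h * G).mulVecLin) := ⟨x, hx, rfl⟩
          rw [hbot] at this
          simpa using this
        have hrk : Module.finrank K (LinearMap.range (Matrix.mulVecLin (aeval C h * G)))
            ≤ 1 := le_trans (Submodule.finrank_mono hle) (hker μ)
        have := htwo h hh
        omega
      have := ih (h * (X - Polynomial.C μ)) step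
      rw [Multiset.map_cons, Multiset.prod_cons, ← mul_assoc]
      exact this
  obtain ⟨m, hm⟩ := hCH
  have hbase : LinearMap.range (Matrix.mulVecLin (aeval C (1 : K[X]) * G)) ≠ ⊥ := by
    rw [_root_.map_one, one_mul]
    intro hbot
    exact hG (mulVecLin_eq_zero_iff.mp (LinearMap.range_eq_bot.mp hbot))
  have := main m 1 hbase
  rw [one_mul, hm, Matrix.aeval_self_charpoly, zero_mul] at this
  rw [Matrix.mulVecLin_zero, LinearMap.range_zero] at this
  exact this rfl

end Descent

section Transfer

variable {F K : Type*} [Field F] [Field K] [Algebra F K] {n : ℕ}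

/-- entrywise scalar extension of a linear functional on matrices. -/
noncomputable def extFun (ψ : Matrix (Fin n) (Fin n) F →ₗ[F] F) :
    Matrix (Fin n) (Fin n) K →ₗ[K] K :=
  ∑ i : Fin n, ∑ j : Fin n,
    (algebraMap F K (ψ (Matrix.single i j 1))) • Matrix.entryLinearMap K K i j

lemma extFun_apply (ψ : Matrix (Fin n) (Fin n) F →ₗ[F] F) (Y : Matrix (Fin n) (Fin n) K) :
    extFun ψ Y = ∑ i : Fin n, ∑ j : Fin n, algebraMap F K (ψ (Matrix.single i j 1)) * Y i j := by
  simp [extFun, LinearMap.sum_apply, smul_eq_mul, Algebra.smul_def]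

lemma extFun_map (ψ : Matrix (Fin n) (Fin n) F →ₗ[F] F) (X : Matrix (Fin n) (Fin n) F) :
    extFun ψ (X.map (algebraMap F K)) = algebraMap F K (ψ X) := by
  rw [extFun_apply]
  have hX : ψ X = ∑ i : Fin n, ∑ j : Fin n, X i j * ψ (Matrix.single i j 1) := by
    conv_lhs => rw [matrix_eq_sum_single X]
    rw [map_sum]
    refine Finset.sum_congr rfl fun i _ => ?_
    rw [map_sum]
    refine Finset.sum_congr rfl fun j _ => ?_
    have hstd : Matrix.single i j (X i j) = X i j • Matrix.single i j (1 : F) := by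
      rw [smul_single, smul_eq_mul, mul_one]
    rw [hstd, _root_.map_smul, smul_eq_mul]
  rw [hX, map_sum]
  refine Finset.sum_congr rfl fun i _ => ?_
  rw [map_sum]
  refine Finset.sum_congr rfl fun j _ => ?_
  rw [_root_.map_mul, Matrix.map_apply]
  ring

/-- lists of matrices over `K` that are entrywise images of lists over `F`. -/
lemma exists_list_preimage (S : Finset (Matrix (Fin n) (Fin n) F))
    (l' : List (Matrix (Fin n) (Fin n) K))
    (hl' : ∀ a ∈ l', a ∈ (fun X : Matrix (Fin n) (Fin n) F =>
      X.map (algebraMap F K)) '' (S : Set (Matrix (Fin n) (Fin n) F))) :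
    ∃ l : List (Matrix (Fin n) (Fin n) F), (∀ a ∈ l, a ∈ (S : Set (Matrix (Fin n) (Fin n) F)))
      ∧ l.map (fun X => X.map (algebraMap F K)) = l' := by
  induction l' with
  | nil => exact ⟨[], by simp⟩
  | cons a t ih =>
    obtain ⟨a₀, ha₀S, ha₀⟩ := hl' a (List.mem_cons_self)
    obtain ⟨l, hlS, hl⟩ := ih fun b hb => hl' b (List.mem_cons_of_mem a hb)
    refine ⟨a₀ :: l, ?_, by simp [ha₀, hl]⟩
    intro b hb
    rcases List.mem_cons.mp hb with rfl | hb
    exacts [ha₀S, hlS b hb]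

end Transfer

section Indep

variable {F K : Type*} [Field F] [Field K] [Algebra F K] {n : ℕ}

lemma indep_powers_of_map {C : Matrix (Fin n) (Fin n) F}
    (hmin : (minpoly F C).natDegree = n) (q : K[X]) (hq : q ≠ 0) (hqdeg : q.natDegree < n) :
    aeval (C.map (algebraMap F K)) q ≠ 0 := by
  have hindF : ∀ f : F[X], f ≠ 0 → f.natDegree < n → aeval C f ≠ 0 := by
    intro f hf hdeg hz
    have h1 := minpoly.degree_le_of_ne_zero F C hf hz
    have h2 : (minpoly F C).natDegree ≤ f.natDegree := natDegree_le_natDegree h1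
    omega
  set ι : (Fin n → F) →ₗ[F] Matrix (Fin n) (Fin n) F :=
    { toFun := fun a => ∑ b : Fin n, a b • C ^ (b : ℕ)
      map_add' := fun a b => by
        simp only [Pi.add_apply, add_smul, Finset.sum_add_distrib]
      map_smul' := fun c a => by
        simp only [Pi.smul_apply, smul_eq_mul, RingHom.id_apply, Finset.smul_sum, smul_smul] }
    with hιdef
  have hι : ∀ b : Fin n, ι (Pi.single b 1) = C ^ (b : ℕ) := by
    intro b
    have hshow : ι (Pi.single b 1) = ∑ c : Fin n, (Pi.single b (1 : F) : Fin n → F) c • C ^ (c : ℕ) := rfl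
    rw [hshow, Finset.sum_eq_single b]
    · simp
    · intro c _ hc
      rw [Pi.single_eq_of_ne hc, zero_smul]
    · intro hb
      exact absurd (Finset.mem_univ b) hb
  have hinj : LinearMap.ker ι = ⊥ := by
    rw [LinearMap.ker_eq_bot']
    intro a ha
    by_contra hane
    obtain ⟨b₀, hb₀⟩ := Function.ne_iff.mp hane
    set f : F[X] := ∑ b : Fin n, Polynomial.monomial (b : ℕ) (a b) with hfdef
    have hfa : aeval C f = ι a := by
      rw [hfdef, map_sum]
      show _ = ∑ b : Fin n, a b • C ^ (b : ℕ)
      refine Finset.sum_congr rfl fun b _ => ?_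
      rw [aeval_monomial, Algebra.smul_def]
    have hfdeg : f.natDegree < n := by
      have hle : f.natDegree ≤ n - 1 := by
        apply natDegree_sum_le_of_forall_le
        intro b _
        exact le_trans (natDegree_monomial_le (a b)) (by omega)
      have hn : 1 ≤ n := Fin.pos b₀
      omega
    have hfne : f ≠ 0 := by
      intro hf0
      apply hb₀
      have hco : f.coeff (b₀ : ℕ) = a b₀ := by
        rw [hfdef, finset_sum_coeff]
        rw [Finset.sum_eq_single b₀]
        · simp
        · intro c _ hc
          rw [coeff_monomial]
          rw [if_neg (fun h => hc (Fin.ext h))]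
        · intro hb
          exact absurd (Finset.mem_univ b₀) hb
      rw [hf0] at hco
      simpa using hco.symm
    exact hindF f hfne hfdeg (by rw [hfa, ha])
  obtain ⟨ρ, hρ⟩ := ι.exists_leftInverse_of_injective hinj
  intro hqz
  have hrel : ∑ b : Fin n, q.coeff (b : ℕ) • (C.map (algebraMap F K)) ^ (b : ℕ) = 0 := by
    have := aeval_eq_sum_range' hqdeg (C.map (algebraMap F K))
    rw [hqz] at this
    rw [Fin.sum_univ_eq_sum_range (fun b => q.coeff b • (C.map (algebraMap F K)) ^ b) n]
    exact this.symm
  have hcoeff : ∀ b₀ : Fin n, q.coeff (b₀ : ℕ) = 0 := by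
    intro b₀
    set ψ : Matrix (Fin n) (Fin n) F →ₗ[F] F := (LinearMap.proj b₀).comp ρ with hψdef
    have happ := congrArg (extFun (K := K) ψ) hrel
    rw [map_sum, map_zero] at happ
    have hterm : ∀ b : Fin n, b ∈ Finset.univ →
        extFun (K := K) ψ (q.coeff (b : ℕ) • (C.map (algebraMap F K)) ^ (b : ℕ))
          = if b = b₀ then q.coeff (b₀ : ℕ) else 0 := by
      intro b _
      rw [_root_.map_smul, smul_eq_mul]
      have hpow : (C.map (algebraMap F K)) ^ (b : ℕ) = (C ^ (b : ℕ)).map (algebraMap F K) := by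
        rw [← RingHom.mapMatrix_apply, ← RingHom.mapMatrix_apply, map_pow]
      rw [hpow, extFun_map]
      have hψval : ψ (C ^ (b : ℕ)) = if b₀ = b then 1 else 0 := by
        rw [← hι b, hψdef, LinearMap.comp_apply]
        have : ρ (ι (Pi.single b 1)) = Pi.single b 1 := by
          have := congrArg (fun g => g (Pi.single b (1 : F))) hρ
          simpa using this
        rw [this]
        simp [Pi.single_apply]
      rw [hψval]
      by_cases hbb : b = b₀
      · subst hbb
        simp
      · simp [hbb, Ne.symm hbb]
    rw [Finset.sum_congr rfl hterm, Finset.sum_ite_eq' Finset.univ b₀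
      (fun _ => q.coeff (b₀ : ℕ))] at happ
    simpa using happ
  apply hq
  ext b
  rcases lt_or_ge b n with hb | hb
  · simpa using hcoeff ⟨b, hb⟩
  · simp [coeff_eq_zero_of_natDegree_lt (lt_of_lt_of_le hqdeg hb)]

end Indep

section MainClosed

variable {K : Type*} [Field K] {n : ℕ}

lemma trace_of_dual (φ : Module.Dual K (Matrix (Fin n) (Fin n) K))
    (x : Matrix (Fin n) (Fin n) K) :
    Matrix.trace ((Matrix.of fun i j => φ (Matrix.single j i (1 : K))) * x) = φ x := by
  have h1 : Matrix.trace ((Matrix.of fun i j => φ (Matrix.single j i (1 : K))) * x)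
      = ∑ i, ∑ j, φ (Matrix.single j i (1 : K)) * x j i := by
    simp [Matrix.trace, Matrix.diag, Matrix.mul_apply]
  have h2 : φ x = ∑ i, ∑ j, x i j * φ (Matrix.single i j (1 : K)) := by
    conv_lhs => rw [matrix_eq_sum_single x]
    rw [map_sum]
    refine Finset.sum_congr rfl fun i _ => ?_
    rw [map_sum]
    refine Finset.sum_congr rfl fun j _ => ?_
    have hstd : Matrix.single i j (x i j) = x i j • Matrix.single i j (1 : K) := by
      rw [smul_single, smul_eq_mul, mul_one]
    rw [hstd, _root_.map_smul, smul_eq_mul]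
  rw [h1, h2, Finset.sum_comm]
  exact Finset.sum_congr rfl fun j _ => Finset.sum_congr rfl fun i _ => mul_comm _ _

lemma aeval_mem_wordSpan_matrix (hn : 1 ≤ n) {T : Set (Matrix (Fin n) (Fin n) K)}
    {C : Matrix (Fin n) (Fin n) K} (hC : C ∈ T) (h : K[X]) :
    aeval C h ∈ wordSpan K T (n - 1) := by
  set p := Matrix.charpoly C with hp
  have hmonic : p.Monic := Matrix.charpoly_monic C
  have hpdeg : p.natDegree = n := by
    rw [hp, Matrix.charpoly_natDegree_eq_dim, Fintype.card_fin]
  have hdecomp : aeval C h = aeval C (h %ₘ p) := by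
    conv_lhs => rw [← modByMonic_add_div h p]
    rw [map_add, _root_.map_mul]
    have : aeval C p = 0 := Matrix.aeval_self_charpoly C
    rw [this, zero_mul, add_zero]
  rw [hdecomp]
  have hp1 : p ≠ 1 := by
    intro h1
    rw [h1, natDegree_one] at hpdeg
    omega
  have hdeg : (h %ₘ p).natDegree < n := by
    have := natDegree_modByMonic_lt h hmonic hp1
    omega
  exact aeval_mem_wordSpan hC _ hdeg

lemma wordSpan_top_of_closed [IsAlgClosed K] (hn : 1 ≤ n)
    {T : Set (Matrix (Fin n) (Fin n) K)} (hgenT : IsGeneratingSystem K T)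
    {C : Matrix (Fin n) (Fin n) K} (hC : C ∈ T)
    (hind : ∀ q : K[X], q ≠ 0 → q.natDegree < n → aeval C q ≠ 0) :
    wordSpan K T (n - 1 + (n - 1)) = ⊤ := by
  by_contra hne
  obtain ⟨φ, hφ0, hφmap⟩ := Submodule.exists_dual_map_eq_bot_of_lt_top
    (lt_top_iff_ne_top.mpr hne) inferInstance
  have hφ : ∀ x ∈ wordSpan K T (n - 1 + (n - 1)), φ x = 0 := by
    intro x hx
    have hmem : φ x ∈ (wordSpan K T (n - 1 + (n - 1))).map φ := ⟨x, hx, rfl⟩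
    rw [hφmap] at hmem
    simpa using hmem
  set G := Matrix.of fun i j => φ (Matrix.single j i (1 : K)) with hGdef
  have htr : ∀ x, Matrix.trace (G * x) = φ x := fun x => trace_of_dual φ x
  have hGne : G ≠ 0 := by
    intro h0
    apply hφ0
    apply LinearMap.ext
    intro x
    rw [← htr x, h0, zero_mul]
    simp
  have hCH : ∃ m : Multiset K, (m.map fun μ => X - Polynomial.C μ).prod = Matrix.charpoly C :=
    ⟨(Matrix.charpoly C).roots, ((IsAlgClosed.splits _).eq_prod_roots_of_monic
      (Matrix.charpoly_monic C)).symm⟩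
  obtain ⟨h, hrank⟩ := exists_rank_one_image (fun μ => ker_shift_finrank_le_one hind μ) hCH hGne
  set G' := aeval C h * G with hG'def
  obtain ⟨v, hv0, hvall⟩ := finrank_eq_one_iff'.mp hrank
  set w : Fin n → K := (v : Fin n → K) with hwdef
  have hw0 : w ≠ 0 := fun hw => hv0 (Subtype.ext (by simpa [hwdef] using hw))
  have hcol : ∀ j, ∃ c : K, G'.mulVec (Pi.single j 1) = c • w := by
    intro j
    have hmem : G'.mulVec (Pi.single j 1) ∈ LinearMap.range (Matrix.mulVecLin G') :=
      ⟨Pi.single j 1, rfl⟩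
    obtain ⟨c, hc⟩ := hvall ⟨_, hmem⟩
    refine ⟨c, ?_⟩
    have h' := congrArg Subtype.val hc
    simpa using h'.symm
  choose r hr using hcol
  have hentry : ∀ i j, G' i j = r j * w i := by
    intro i j
    have := congrFun (hr j) i
    simpa [Matrix.mulVec_single] using this
  have hrj : ∃ j, r j ≠ 0 := by
    by_contra hall
    push_neg at hall
    have hG'0 : G' = 0 := by
      ext i j
      rw [hentry i j, hall j, zero_mul]
      rfl
    rw [hG'0] at hrank
    rw [Matrix.mulVecLin_zero, LinearMap.range_zero] at hrank
    simp at hrank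
  obtain ⟨j₀, hj₀⟩ := hrj
  have hsingle : Pi.single j₀ (1 : K) ∈ (wordSpan K T (n - 1)).map (mulVecAt w) := by
    rw [lemma1 hgenT w hw0]
    trivial
  obtain ⟨x, hx, hxw⟩ := hsingle
  have hxw' : x.mulVec w = Pi.single j₀ 1 := hxw
  have hlower : Matrix.trace (G' * x) = r j₀ := by
    have hsum : Matrix.trace (G' * x) = ∑ j, r j * (x.mulVec w) j := by
      simp only [Matrix.trace, Matrix.diag, Matrix.mul_apply, hentry, Matrix.mulVec,
        dotProduct, Finset.mul_sum]
      rw [Finset.sum_comm]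
      exact Finset.sum_congr rfl fun j _ => Finset.sum_congr rfl fun i _ => by ring
    rw [hsum, hxw']
    simp [Pi.single_apply]
  have hupper : Matrix.trace (G' * x) = 0 := by
    have hx2 : x * aeval C h ∈ wordSpan K T (n - 1 + (n - 1)) :=
      mul_mem_wordSpan hx (aeval_mem_wordSpan_matrix hn hC h)
    calc Matrix.trace (G' * x) = Matrix.trace (aeval C h * (G * x)) := by
          rw [hG'def, mul_assoc]
      _ = Matrix.trace ((G * x) * aeval C h) := Matrix.trace_mul_comm _ _
      _ = Matrix.trace (G * (x * aeval C h)) := by rw [mul_assoc]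
      _ = φ (x * aeval C h) := htr _
      _ = 0 := hφ _ hx2
  rw [hlower] at hupper
  exact hj₀ hupper

end MainClosed

section Transfer2

variable {F K : Type*} [Field F] [Field K] [Algebra F K] {n : ℕ}

lemma map_list_prod_matrix (l : List (Matrix (Fin n) (Fin n) F)) :
    (l.prod).map (algebraMap F K) = (l.map fun X => X.map (algebraMap F K)).prod := by
  have h := map_list_prod ((algebraMap F K).mapMatrix) l
  exact h

lemma map_mem_wordSpan {S : Finset (Matrix (Fin n) (Fin n) F)} {i : ℕ}
    {X : Matrix (Fin n) (Fin n) F} (hX : X ∈ wordSpan F (S : Set (Matrix (Fin n) (Fin n) F)) i) :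
    X.map (algebraMap F K) ∈ wordSpan K
      ((fun Z : Matrix (Fin n) (Fin n) F => Z.map (algebraMap F K)) ''
        (S : Set (Matrix (Fin n) (Fin n) F))) i := by
  induction hX using Submodule.span_induction with
  | mem x hx =>
    obtain ⟨l, hl, hm, rfl⟩ := hx
    refine Submodule.subset_span ⟨l.map fun Z => Z.map (algebraMap F K), by simpa using hl,
      ?_, (map_list_prod_matrix l).symm⟩
    intro a ha
    obtain ⟨b, hb, rfl⟩ := List.mem_map.mp ha
    exact ⟨b, hm b hb, rfl⟩
  | zero =>
    have : (0 : Matrix (Fin n) (Fin n) F).map (algebraMap F K) = 0 := by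
      ext i j; simp
    rw [this]; exact Submodule.zero_mem _
  | add x y _ _ hx hy =>
    have : (x + y).map (algebraMap F K) = x.map (algebraMap F K) + y.map (algebraMap F K) := by
      ext i j; simp
    rw [this]; exact Submodule.add_mem _ hx hy
  | smul c x _ hx =>
    have : (c • x).map (algebraMap F K) = (algebraMap F K c) • x.map (algebraMap F K) := by
      ext i j; simp
    rw [this]; exact Submodule.smul_mem _ _ hx

lemma stdBasis_map (i j : Fin n) :
    (Matrix.single i j (1 : F)).map (algebraMap F K) = Matrix.single i j (1 : K) := by
  ext i' j'
  simp [Matrix.single, Matrix.map_apply, apply_ite]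

lemma isGen_image {S : Finset (Matrix (Fin n) (Fin n) F)}
    (hgen : IsGeneratingSystem F (S : Set (Matrix (Fin n) (Fin n) F))) :
    IsGeneratingSystem K ((fun Z : Matrix (Fin n) (Fin n) F => Z.map (algebraMap F K)) ''
      (S : Set (Matrix (Fin n) (Fin n) F))) := by
  intro Y
  have hstd : ∀ p : Fin n × Fin n, ∃ i,
      Matrix.single p.1 p.2 (1 : F) ∈ wordSpan F (S : Set (Matrix (Fin n) (Fin n) F)) i :=
    fun p => hgen _
  choose m hm using hstd
  refine ⟨Finset.univ.sup m, ?_⟩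
  have hY : Y = ∑ i : Fin n, ∑ j : Fin n, Y i j • Matrix.single i j (1 : K) := by
    conv_lhs => rw [matrix_eq_sum_single Y]
    refine Finset.sum_congr rfl fun i _ => Finset.sum_congr rfl fun j _ => ?_
    rw [smul_single, smul_eq_mul, mul_one]
  rw [hY]
  refine Submodule.sum_mem _ fun i _ => Submodule.sum_mem _ fun j _ => Submodule.smul_mem _ _ ?_
  rw [← stdBasis_map (F := F) (K := K) i j]
  exact wordSpan_mono (Finset.le_sup (Finset.mem_univ (i, j))) (map_mem_wordSpan (hm (i, j)))

lemma top_of_map_top {S : Finset (Matrix (Fin n) (Fin n) F)} {m : ℕ}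
    (htop : wordSpan K ((fun Z : Matrix (Fin n) (Fin n) F => Z.map (algebraMap F K)) ''
      (S : Set (Matrix (Fin n) (Fin n) F))) m = ⊤) :
    wordSpan F (S : Set (Matrix (Fin n) (Fin n) F)) m = ⊤ := by
  by_contra hne
  obtain ⟨ψ, hψ0, hψmap⟩ := Submodule.exists_dual_map_eq_bot_of_lt_top
    (lt_top_iff_ne_top.mpr hne) inferInstance
  have hψ : ∀ x ∈ wordSpan F (S : Set (Matrix (Fin n) (Fin n) F)) m, ψ x = 0 := by
    intro x hx
    have hmem : ψ x ∈ (wordSpan F (S : Set (Matrix (Fin n) (Fin n) F)) m).map ψ := ⟨x, hx, rfl⟩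
    rw [hψmap] at hmem
    simpa using hmem
  have hkill : wordSpan K ((fun Z : Matrix (Fin n) (Fin n) F => Z.map (algebraMap F K)) ''
      (S : Set (Matrix (Fin n) (Fin n) F))) m ≤ LinearMap.ker (extFun (K := K) ψ) := by
    rw [wordSpan, Submodule.span_le]
    rintro x ⟨l', hlen, hmem, rfl⟩
    obtain ⟨l, hlS, rfl⟩ := exists_list_preimage S l' hmem
    rw [SetLike.mem_coe, LinearMap.mem_ker, ← map_list_prod_matrix, extFun_map]
    have hx : l.prod ∈ wordSpan F (S : Set (Matrix (Fin n) (Fin n) F)) m :=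
      Submodule.subset_span ⟨l, by simpa using hlen, hlS, rfl⟩
    rw [hψ _ hx, map_zero]
  obtain ⟨X, hX⟩ : ∃ X, ψ X ≠ 0 := by
    by_contra hall
    push_neg at hall
    exact hψ0 (LinearMap.ext fun X => hall X)
  have h0 : extFun (K := K) ψ (X.map (algebraMap F K)) = 0 := by
    have := hkill (htop ▸ Submodule.mem_top :
      X.map (algebraMap F K) ∈ wordSpan K _ m)
    simpa using this
  rw [extFun_map] at h0
  apply hX
  apply (algebraMap F K).injective
  rw [h0, map_zero]

end Transfer2


theorem length_le_of_nonderogatory_mem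
    (F : Type*) [Field F] (n : ℕ) (hn : 1 ≤ n)
    (S : Finset (Matrix (Fin n) (Fin n) F))
    (hgen : IsGeneratingSystem F (S : Set (Matrix (Fin n) (Fin n) F)))
    (hA : ∃ M ∈ S, (minpoly F M).natDegree = n) :
    genLength F (S : Set (Matrix (Fin n) (Fin n) F)) ≤ 2 * n - 2 := by
  classical
  obtain ⟨C, hCS, hCdeg⟩ := hA
  set K := AlgebraicClosure F
  have hgenK := isGen_image (K := K) hgen
  have hCK : C.map (algebraMap F K) ∈
      ((fun Z : Matrix (Fin n) (Fin n) F => Z.map (algebraMap F K)) ''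
        (S : Set (Matrix (Fin n) (Fin n) F))) := ⟨C, hCS, rfl⟩
  have hind : ∀ q : K[X], q ≠ 0 → q.natDegree < n → aeval (C.map (algebraMap F K)) q ≠ 0 :=
    fun q hq hdq => indep_powers_of_map (K := K) hCdeg q hq hdq
  have htopK := wordSpan_top_of_closed hn hgenK hCK hind
  have htopF := top_of_map_top (K := K) htopK
  have harith : n - 1 + (n - 1) = 2 * n - 2 := by omega
  rw [harith] at htopF
  exact Nat.sInf_le htopF
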